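/- For the dihedral group D₈ of order 8, exactly 5 subgroups are not in CD(D₈); i.e., δ_CD(D₈) = 5. -/

import Mathlib

noncomputable def mCD {G : Type*} [Group G] (H : Subgroup G) : ℕ :=
  Nat.card H * Nat.card (Subgroup.centralizer (H : Set G))

noncomputable def mStar (G : Type*) [Group G] : ℕ :=
  sSup (Set.range fun H : Subgroup G => mCD H)

noncomputable def CD (G : Type*) [Group G] : Set (Subgroup G) :=
  {H | mCD H = mStar G}

noncomputable def deltaCD (G : Type*) [Group G] : ℕ :=
  Nat.card {H : Subgroup G // H ∉ CD G}

namespace D8aux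
open DihedralGroup Subgroup

abbrev D := DihedralGroup 4

def mkSub (s : Finset D) (h1 : (1:D) ∈ s) (hmul : ∀ a ∈ s, ∀ b ∈ s, a*b ∈ s)
    (hinv : ∀ a ∈ s, a⁻¹ ∈ s) : Subgroup D where
  carrier := ↑s
  one_mem' := h1
  mul_mem' := fun {a b} ha hb => hmul a ha b hb
  inv_mem' := fun {a} ha => hinv a ha

lemma mem_mkSub {s h1 hmul hinv} {x : D} : x ∈ mkSub s h1 hmul hinv ↔ x ∈ s := Iff.rfl

lemma card_mkSub {s h1 hmul hinv} : Nat.card (mkSub s h1 hmul hinv) = s.card := by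
  have : Nat.card {x // x ∈ s} = s.card := Nat.card_eq_finsetCard _
  exact this

lemma centralizer_mkSub_eq {s t : Finset D} {h1 hm hi h1' hm' hi'}
    (H : ∀ x : D, (∀ g ∈ s, g * x = x * g) ↔ x ∈ t) :
    Subgroup.centralizer ↑(mkSub s h1 hm hi) = mkSub t h1' hm' hi' := by
  ext x
  rw [Subgroup.mem_centralizer_iff, mem_mkSub, ← H x]
  exact Iff.rfl

def Hz : Subgroup D := mkSub {1, r 2} (by decide) (by decide) (by decide)
def Hs0 : Subgroup D := mkSub {1, sr 0} (by decide) (by decide) (by decide)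
def Hs1 : Subgroup D := mkSub {1, sr 1} (by decide) (by decide) (by decide)
def Hs2 : Subgroup D := mkSub {1, sr 2} (by decide) (by decide) (by decide)
def Hs3 : Subgroup D := mkSub {1, sr 3} (by decide) (by decide) (by decide)
def C02 : Subgroup D := mkSub {1, r 2, sr 0, sr 2} (by decide) (by decide) (by decide)
def C13 : Subgroup D := mkSub {1, r 2, sr 1, sr 3} (by decide) (by decide) (by decide)

lemma nat_dvd8 : ∀ n : ℕ, n ∣ 8 → n = 1 ∨ n = 2 ∨ n = 4 ∨ n = 8 := by
  intro n hn
  have hle : n ≤ 8 := Nat.le_of_dvd (by norm_num) hn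
  interval_cases n <;> revert hn <;> decide

lemma nat_dvd8' : ∀ n : ℕ, 4 ∣ n → n ∣ 8 → n = 4 ∨ n = 8 := by
  intro n h4 hn
  have hle : n ≤ 8 := Nat.le_of_dvd (by norm_num) hn
  interval_cases n <;> revert h4 hn <;> decide

lemma cardD : Nat.card D = 8 := by
  rw [Nat.card_eq_fintype_card]; decide

lemma center_eq : Subgroup.center D = Hz := by
  ext x
  rw [Subgroup.mem_center_iff, Hz, mem_mkSub]
  revert x; decide

lemma mCD_bot : mCD (⊥ : Subgroup D) = 8 := by
  have hc : Subgroup.centralizer ((⊥ : Subgroup D) : Set D) = ⊤ := by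
    rw [eq_top_iff']
    intro x
    rw [Subgroup.mem_centralizer_iff]
    rintro g hg
    rw [Subgroup.coe_bot, Set.mem_singleton_iff] at hg
    subst hg; simp
  rw [mCD, hc, Subgroup.card_bot, Subgroup.card_top, cardD]

lemma mCD_top : mCD (⊤ : Subgroup D) = 16 := by
  have hc : Subgroup.centralizer ((⊤ : Subgroup D) : Set D) = Subgroup.center D := by
    rw [Subgroup.coe_top, Subgroup.centralizer_univ]
  rw [mCD, hc, center_eq, Subgroup.card_top, cardD, Hz, card_mkSub]
  decide

lemma mCD_Hz : mCD Hz = 16 := by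
  have hc : Subgroup.centralizer (Hz : Set D) = ⊤ := by
    have key : ∀ x : D, ∀ g ∈ ({1, r 2} : Finset D), g * x = x * g := by decide
    rw [eq_top_iff']
    intro x
    rw [Subgroup.mem_centralizer_iff]
    intro g hg
    exact key x g hg
  rw [mCD, hc, Subgroup.card_top, cardD, Hz, card_mkSub]
  decide

lemma mCD_Hs0 : mCD Hs0 = 8 := by
  rw [mCD, Hs0, centralizer_mkSub_eq (t := {1, r 2, sr 0, sr 2})
    (h1' := by decide) (hm' := by decide) (hi' := by decide) (by decide),
    card_mkSub, card_mkSub]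
  decide

lemma mCD_Hs1 : mCD Hs1 = 8 := by
  rw [mCD, Hs1, centralizer_mkSub_eq (t := {1, r 2, sr 1, sr 3})
    (h1' := by decide) (hm' := by decide) (hi' := by decide) (by decide),
    card_mkSub, card_mkSub]
  decide

lemma mCD_Hs2 : mCD Hs2 = 8 := by
  rw [mCD, Hs2, centralizer_mkSub_eq (t := {1, r 2, sr 0, sr 2})
    (h1' := by decide) (hm' := by decide) (hi' := by decide) (by decide),
    card_mkSub, card_mkSub]
  decide

lemma mCD_Hs3 : mCD Hs3 = 8 := by
  rw [mCD, Hs3, centralizer_mkSub_eq (t := {1, r 2, sr 1, sr 3})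
    (h1' := by decide) (hm' := by decide) (hi' := by decide) (by decide),
    card_mkSub, card_mkSub]
  decide

lemma classify (H : Subgroup D) :
    mCD H = 16 ∨ (mCD H = 8 ∧ (H = ⊥ ∨ H = Hs0 ∨ H = Hs1 ∨ H = Hs2 ∨ H = Hs3)) := by
  have h8 : Nat.card H ∣ 8 := cardD ▸ Subgroup.card_subgroup_dvd_card H
  have hn := nat_dvd8 _ h8
  rcases hn with h1 | h2 | h4 | hc8
  · -- card 1
    right
    have hb : H = ⊥ := Subgroup.card_eq_one.mp h1
    exact ⟨hb ▸ mCD_bot, Or.inl hb⟩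
  · -- card 2
    have hne : H ≠ ⊥ := by
      intro hb
      rw [hb, Subgroup.card_bot] at h2
      exact absurd h2 (by norm_num)
    obtain ⟨a, ha⟩ := Subgroup.ne_bot_iff_exists_ne_one.mp hne
    have hx1 : (a : D) ≠ 1 := by
      intro h; exact ha (Subtype.ext h)
    have hord : orderOf (a : D) ∣ 2 := by
      rw [Subgroup.orderOf_coe]
      exact h2 ▸ orderOf_dvd_natCard a
    have hxx : (a : D) * (a : D) = 1 := by
      have h2' : (a : D) ^ 2 = 1 := orderOf_dvd_iff_pow_eq_one.mp hord
      rwa [sq] at h2'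
    have hcases : (a : D) = r 2 ∨ (a : D) = sr 0 ∨ (a : D) = sr 1 ∨ (a : D) = sr 2
        ∨ (a : D) = sr 3 := by
      revert hx1 hxx
      generalize (a : D) = x
      revert x; decide
    have key : ∀ (s : Finset D) (h1 hm hi), (s = {1, (a : D)}) →
        H = mkSub s h1 hm hi := by
      intro s h1 hm hi hs
      refine (Subgroup.eq_of_le_of_card_ge ?_ ?_).symm
      · intro y hy
        rw [mem_mkSub, hs, Finset.mem_insert, Finset.mem_singleton] at hy
        rcases hy with hy | hy
        · exact hy ▸ H.one_mem
        · exact hy ▸ a.2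
      · rw [card_mkSub, h2, hs, Finset.card_insert_of_notMem (by simp [Ne.symm hx1]),
          Finset.card_singleton]
    rcases hcases with hc | hc | hc | hc | hc
    · left
      have : H = Hz := key _ _ _ _ (by rw [hc])
      rw [this]; exact mCD_Hz
    · right
      have : H = Hs0 := key _ _ _ _ (by rw [hc])
      exact ⟨this ▸ mCD_Hs0, Or.inr (Or.inl this)⟩
    · right
      have : H = Hs1 := key _ _ _ _ (by rw [hc])
      exact ⟨this ▸ mCD_Hs1, Or.inr (Or.inr (Or.inl this))⟩
    · right
      have : H = Hs2 := key _ _ _ _ (by rw [hc])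
      exact ⟨this ▸ mCD_Hs2, Or.inr (Or.inr (Or.inr (Or.inl this)))⟩
    · right
      have : H = Hs3 := key _ _ _ _ (by rw [hc])
      exact ⟨this ▸ mCD_Hs3, Or.inr (Or.inr (Or.inr (Or.inr this)))⟩
  · -- card 4
    left
    have hcomm : IsMulCommutative H := by
      refine ⟨⟨?_⟩⟩
      have : Fact (Nat.Prime 2) := ⟨by norm_num⟩
      exact IsPGroup.commutative_of_card_eq_prime_sq (p := 2) (by rw [h4]; norm_num)
    have hle : H ≤ Subgroup.centralizer (H : Set D) := Subgroup.le_centralizer H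
    have hdvd4 : (4 : ℕ) ∣ Nat.card (Subgroup.centralizer (H : Set D)) := by
      have hd := Subgroup.card_dvd_of_le hle
      rwa [h4] at hd
    have hdvd8 : Nat.card (Subgroup.centralizer (H : Set D)) ∣ 8 :=
      cardD ▸ Subgroup.card_subgroup_dvd_card _
    have hc : Nat.card (Subgroup.centralizer (H : Set D)) = 4 ∨
        Nat.card (Subgroup.centralizer (H : Set D)) = 8 := by
      exact nat_dvd8' _ hdvd4 hdvd8
    rcases hc with hc | hc
    · rw [mCD, h4, hc]
    · exfalso
      have htop : Subgroup.centralizer (H : Set D) = ⊤ :=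
        Subgroup.eq_top_of_card_eq _ (by rw [hc, cardD])
      have hcen : H ≤ Subgroup.center D := by
        intro x hx
        rw [Subgroup.mem_center_iff]
        intro g
        have hg : g ∈ Subgroup.centralizer (H : Set D) := htop ▸ Subgroup.mem_top g
        exact ((Subgroup.mem_centralizer_iff.mp hg) x hx).symm
      have hdd := Subgroup.card_dvd_of_le hcen
      rw [h4, center_eq, Hz, card_mkSub] at hdd
      revert hdd; decide
  · -- card 8
    left
    have : H = ⊤ := Subgroup.eq_top_of_card_eq _ (by rw [hc8, cardD])
    rw [this]; exact mCD_top

lemma mStar_eq : mStar D = 16 := by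
  have bound : ∀ x ∈ Set.range (fun H : Subgroup D => mCD H), x ≤ 16 := by
    rintro x ⟨H, rfl⟩
    show mCD H ≤ 16
    rcases classify H with h | ⟨h, _⟩ <;> omega
  apply le_antisymm
  · exact csSup_le ⟨mCD (⊤ : Subgroup D), ⟨⊤, rfl⟩⟩ bound
  · exact le_csSup ⟨16, bound⟩ ⟨⊤, mCD_top⟩

lemma ne_of_mem_not_mem {A B : Subgroup D} (x : D) (hA : x ∈ A) (hB : x ∉ B) : A ≠ B :=
  fun h => hB (h ▸ hA)

end D8aux

open D8aux DihedralGroup in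
theorem stmt18 : deltaCD (DihedralGroup 4) = 5 := by
  classical
  have hiff : ∀ H : Subgroup D, (H ∉ CD D) ↔
      H ∈ ({⊥, Hs0, Hs1, Hs2, Hs3} : Finset (Subgroup D)) := by
    intro H
    simp only [CD, Set.mem_setOf_eq, mStar_eq, Finset.mem_insert, Finset.mem_singleton]
    constructor
    · intro h
      rcases classify H with h16 | ⟨_, hl⟩
      · exact absurd h16 h
      · exact hl
    · rintro (rfl | rfl | rfl | rfl | rfl)
      · rw [mCD_bot]; omega
      · rw [mCD_Hs0]; omega
      · rw [mCD_Hs1]; omega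
      · rw [mCD_Hs2]; omega
      · rw [mCD_Hs3]; omega
  have hequiv : {H : Subgroup D // H ∉ CD D} ≃
      {H : Subgroup D // H ∈ ({⊥, Hs0, Hs1, Hs2, Hs3} : Finset (Subgroup D))} :=
    Equiv.subtypeEquivRight hiff
  rw [deltaCD, Nat.card_congr hequiv, Nat.card_eq_finsetCard]
  have m0 : (sr 0 : D) ∈ Hs0 := mem_mkSub.mpr (by decide)
  have m1 : (sr 1 : D) ∈ Hs1 := mem_mkSub.mpr (by decide)
  have m2 : (sr 2 : D) ∈ Hs2 := mem_mkSub.mpr (by decide)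
  have m3 : (sr 3 : D) ∈ Hs3 := mem_mkSub.mpr (by decide)
  have n00 : (sr 0 : D) ∉ (⊥ : Subgroup D) := fun h => absurd (Subgroup.mem_bot.mp h) (by decide)
  have n01 : (sr 0 : D) ∉ Hs1 := fun h => absurd (mem_mkSub.mp h) (by decide)
  have n02 : (sr 0 : D) ∉ Hs2 := fun h => absurd (mem_mkSub.mp h) (by decide)
  have n03 : (sr 0 : D) ∉ Hs3 := fun h => absurd (mem_mkSub.mp h) (by decide)
  have n12 : (sr 1 : D) ∉ Hs2 := fun h => absurd (mem_mkSub.mp h) (by decide)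
  have n13 : (sr 1 : D) ∉ Hs3 := fun h => absurd (mem_mkSub.mp h) (by decide)
  have n23 : (sr 2 : D) ∉ Hs3 := fun h => absurd (mem_mkSub.mp h) (by decide)
  have n10 : (sr 1 : D) ∉ (⊥ : Subgroup D) := fun h => absurd (Subgroup.mem_bot.mp h) (by decide)
  have n20 : (sr 2 : D) ∉ (⊥ : Subgroup D) := fun h => absurd (Subgroup.mem_bot.mp h) (by decide)
  have n30 : (sr 3 : D) ∉ (⊥ : Subgroup D) := fun h => absurd (Subgroup.mem_bot.mp h) (by decide)
  have d1 : (⊥ : Subgroup D) ≠ Hs0 := (ne_of_mem_not_mem _ m0 n00).symm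
  have d2 : (⊥ : Subgroup D) ≠ Hs1 := (ne_of_mem_not_mem _ m1 n10).symm
  have d3 : (⊥ : Subgroup D) ≠ Hs2 := (ne_of_mem_not_mem _ m2 n20).symm
  have d4 : (⊥ : Subgroup D) ≠ Hs3 := (ne_of_mem_not_mem _ m3 n30).symm
  have d5 : Hs0 ≠ Hs1 := ne_of_mem_not_mem _ m0 n01
  have d6 : Hs0 ≠ Hs2 := ne_of_mem_not_mem _ m0 n02
  have d7 : Hs0 ≠ Hs3 := ne_of_mem_not_mem _ m0 n03
  have d8 : Hs1 ≠ Hs2 := ne_of_mem_not_mem _ m1 n12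
  have d9 : Hs1 ≠ Hs3 := ne_of_mem_not_mem _ m1 n13
  have d10 : Hs2 ≠ Hs3 := ne_of_mem_not_mem _ m2 n23
  rw [Finset.card_insert_of_notMem (by simp [d1, d2, d3, d4]),
    Finset.card_insert_of_notMem (by simp [d5, d6, d7]),
    Finset.card_insert_of_notMem (by simp [d8, d9]),
    Finset.card_insert_of_notMem (by simp [d10]),
    Finset.card_singleton]
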